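/- arXiv:2306.00063 — 3 statements merged into one kernel-verified Lean document; each statement's English description precedes it below -/
import Mathlib

section
/- For every positive rational r/s, the right q-deformation satisfies [r/s]^♯_q = t_{1,q}^{a_1} t_{2,q}^{-a_2} ⋯ t_{1,q}^{a_{2m-1}} t_{2,q}^{-a_{2m}} · (1/0), where [a_1,...,a_{2m}] is the even-length continued fraction expansion of r/s, the q-matrices are t_{1,q} = [[q,1],[0,1]], t_{2,q} = [[1,0],[-q,q]], and the action on a formal fraction is [[a,b],[c,d]]·(x/y) = (ax+by)/(cx+dy). -/
noncomputable section

def cfVal : List ℤ → ℚ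
  | [] => 0
  | a :: t => a + (cfVal t)⁻¹

def pairsToList (L : List (ℕ × ℕ)) : List ℤ :=
  L.flatMap fun p => [(p.1 : ℤ), (p.2 : ℤ)]

def IsCFE (L : List (ℕ × ℕ)) (x : ℚ) : Prop :=
  L ≠ [] ∧ (∀ p ∈ L, 1 ≤ p.2) ∧ (∀ p ∈ L.tail, 1 ≤ p.1) ∧
    cfVal (pairsToList L) = x

def t1q {K : Type*} [Field K] (q : K) : Matrix (Fin 2) (Fin 2) K := !![q, 1; 0, 1]
def t2q {K : Type*} [Field K] (q : K) : Matrix (Fin 2) (Fin 2) K := !![1, 0; -q, q]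
def t1qInv {K : Type*} [Field K] (q : K) : Matrix (Fin 2) (Fin 2) K := !![q⁻¹, -q⁻¹; 0, 1]
def t2qInv {K : Type*} [Field K] (q : K) : Matrix (Fin 2) (Fin 2) K := !![1, 0; 1, q⁻¹]

def qWord {K : Type*} [Field K] (q : K) : List (ℕ × ℕ) → Matrix (Fin 2) (Fin 2) K
  | [] => 1
  | (a, b) :: rest => t1q q ^ a * t2qInv q ^ b * qWord q rest

def qWordNeg {K : Type*} [Field K] (q : K) : List (ℕ × ℕ) → Matrix (Fin 2) (Fin 2) K
  | [] => 1
  | (a, b) :: rest => t1qInv q ^ a * t2q q ^ b * qWordNeg q rest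

def qSharpK {K : Type*} [Field K] (q : K) (a : ℕ) : K := ∑ i ∈ Finset.range a, q ^ i

def qFlatK {K : Type*} [Field K] (q : K) (a : ℕ) : K :=
  (∑ i ∈ Finset.range (a - 1), q ^ i) + q ^ a

def rightCF {K : Type*} [Field K] (q : K) : List (ℕ × ℕ) → K
  | [] => 0
  | (a, b) :: rest =>
      qSharpK q a + q ^ a / (qSharpK q⁻¹ b + (q⁻¹) ^ b / rightCF q rest)

def leftCF {K : Type*} [Field K] (q : K) : List (ℕ × ℕ) → K
  | [] => 0
  | [(a, b)] => qSharpK q a + q ^ a / qFlatK q⁻¹ b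
  | (a, b) :: rest =>
      qSharpK q a + q ^ a / (qSharpK q⁻¹ b + (q⁻¹) ^ b / leftCF q rest)

def FareyDecomp (p q u v : ℕ) : Prop :=
  Nat.Coprime p q ∧ Nat.Coprime u v ∧ u * q = p * v + 1

def AssocInt (r s l : ℕ) : Prop :=
  ∃ (L : List (ℕ × ℕ)) (a b : ℕ),
    IsCFE L ((r : ℚ) / s) ∧ L.getLast? = some (a, b) ∧
    l = if 2 ≤ b then 0 else a

def bumpLast : List (ℕ × ℕ) → List (ℕ × ℕ)
  | [] => []
  | [(c, d)] => [(c, d + 1)]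
  | x :: xs => x :: bumpLast xs


namespace MyAux

noncomputable def myXi : ℝ := liouvilleNumber 3

lemma myXi_pos : 0 < myXi := by
  have h : Summable fun i : ℕ => 1 / (3:ℝ) ^ (Nat.factorial i) :=
    LiouvilleNumber.summable (by norm_num)
  have := Summable.tsum_pos h (fun i => by positivity) 0 (by norm_num)
  simpa [myXi, liouvilleNumber] using this

lemma myXi_trans : Transcendental ℚ myXi := fun h =>
  transcendental_liouvilleNumber (by norm_num : 2 ≤ 3)
    (by
      have := (IsFractionRing.isAlgebraic_iff ℤ ℚ ℝ).mpr h
      simpa [myXi] using this)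

lemma myInj : Function.Injective ((Polynomial.aeval myXi : Polynomial ℚ →ₐ[ℚ] ℝ).toRingHom) :=
  transcendental_iff_injective.mp myXi_trans

noncomputable def myPhi : RatFunc ℚ →+* ℝ := IsFractionRing.lift myInj

lemma myPhi_X : myPhi (RatFunc.X : RatFunc ℚ) = myXi := by
  rw [← RatFunc.algebraMap_X, myPhi, IsFractionRing.lift_algebraMap]
  simp

lemma t1q_pow {K : Type*} [Field K] (q : K) (a : ℕ) :
    (t1q q) ^ a = !![q ^ a, qSharpK q a; 0, 1] := by
  induction a with
  | zero => simp [qSharpK, Matrix.one_fin_two]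
  | succ n ih =>
      rw [pow_succ, ih, t1q, Matrix.mul_fin_two]
      have h : qSharpK q (n + 1) = q ^ n + qSharpK q n := by
        simp [qSharpK, Finset.sum_range_succ]; ring
      rw [h]
      congr 1 <;> ring

lemma t2qInv_pow {K : Type*} [Field K] (q : K) (b : ℕ) :
    (t2qInv q) ^ b = !![1, 0; qSharpK q⁻¹ b, (q⁻¹) ^ b] := by
  induction b with
  | zero => simp [qSharpK, Matrix.one_fin_two]
  | succ n ih =>
      rw [pow_succ, ih, t2qInv, Matrix.mul_fin_two]
      have h : qSharpK q⁻¹ (n + 1) = qSharpK q⁻¹ n + (q⁻¹) ^ n := by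
        simp [qSharpK, Finset.sum_range_succ]
      rw [h, pow_succ]
      congr 1 <;> ring

lemma qWord_cons00 {K : Type*} [Field K] (q : K) (a b : ℕ) (rest : List (ℕ × ℕ)) :
    (qWord q ((a, b) :: rest)) 0 0 =
      (q ^ a + qSharpK q a * qSharpK q⁻¹ b) * (qWord q rest) 0 0 +
        qSharpK q a * (q⁻¹) ^ b * (qWord q rest) 1 0 := by
  have h : qWord q ((a, b) :: rest) = t1q q ^ a * t2qInv q ^ b * qWord q rest := rfl
  rw [h, t1q_pow, t2qInv_pow, Matrix.mul_fin_two, Matrix.mul_apply, Fin.sum_univ_two]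
  simp

lemma qWord_cons10 {K : Type*} [Field K] (q : K) (a b : ℕ) (rest : List (ℕ × ℕ)) :
    (qWord q ((a, b) :: rest)) 1 0 =
      qSharpK q⁻¹ b * (qWord q rest) 0 0 + (q⁻¹) ^ b * (qWord q rest) 1 0 := by
  have h : qWord q ((a, b) :: rest) = t1q q ^ a * t2qInv q ^ b * qWord q rest := rfl
  rw [h, t1q_pow, t2qInv_pow, Matrix.mul_fin_two, Matrix.mul_apply, Fin.sum_univ_two]
  simp

lemma qSharp_nonneg (x : ℝ) (hx : 0 < x) (n : ℕ) : 0 ≤ qSharpK x n :=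
  Finset.sum_nonneg fun i _ => by positivity

lemma qSharp_pos (x : ℝ) (hx : 0 < x) (n : ℕ) (hn : 1 ≤ n) : 0 < qSharpK x n := by
  apply Finset.sum_pos (fun i _ => by positivity)
  exact ⟨0, Finset.mem_range.mpr hn⟩

lemma map_qSharp (x : RatFunc ℚ) (n : ℕ) : myPhi (qSharpK x n) = qSharpK (myPhi x) n := by
  simp [qSharpK]

lemma key (L : List (ℕ × ℕ)) (hb : ∀ p ∈ L, 1 ≤ p.2) :
    0 < myPhi ((qWord (RatFunc.X : RatFunc ℚ) L) 0 0) ∧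
    0 ≤ myPhi ((qWord (RatFunc.X : RatFunc ℚ) L) 1 0) ∧
    (L ≠ [] → 0 < myPhi ((qWord (RatFunc.X : RatFunc ℚ) L) 1 0)) ∧
    rightCF (RatFunc.X : RatFunc ℚ) L =
      (qWord (RatFunc.X : RatFunc ℚ) L) 0 0 / (qWord (RatFunc.X : RatFunc ℚ) L) 1 0 := by
  set q : RatFunc ℚ := RatFunc.X with hq
  induction L with
  | nil =>
      refine ⟨?_, ?_, ?_, ?_⟩ <;>
        simp [qWord, rightCF, Matrix.one_apply]
  | cons p rest ih =>
      obtain ⟨a, b⟩ := p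
      have hb1 : 1 ≤ b := hb (a, b) (by simp)
      obtain ⟨ihA, ihC, _, ihCF⟩ := ih (fun p hp => hb p (List.mem_cons_of_mem _ hp))
      set A := (qWord q rest) 0 0 with hA
      set C := (qWord q rest) 1 0 with hC
      have hxq : myPhi q = myXi := myPhi_X
      have hqpos : 0 < myPhi q := by rw [hxq]; exact myXi_pos
      have hqinv : 0 < myPhi q⁻¹ := by rw [map_inv₀]; positivity
      have hAne : A ≠ 0 := fun h => by simp [h] at ihA
      have h00 := qWord_cons00 q a b rest
      have h10 := qWord_cons10 q a b rest
      rw [← hA, ← hC] at h00 h10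
      have hSb : 0 < myPhi (qSharpK q⁻¹ b) := by
        rw [map_qSharp]; exact qSharp_pos _ hqinv b hb1
      have hSa : 0 ≤ myPhi (qSharpK q a) := by
        rw [map_qSharp]; exact qSharp_nonneg _ hqpos a
      have hM10 : 0 < myPhi ((qWord q ((a, b) :: rest)) 1 0) := by
        rw [h10]
        simp only [map_add, map_mul, map_pow]
        exact add_pos_of_pos_of_nonneg (mul_pos hSb ihA)
          (mul_nonneg (pow_nonneg hqinv.le b) ihC)
      have hM00 : 0 < myPhi ((qWord q ((a, b) :: rest)) 0 0) := by
        rw [h00]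
        simp only [map_add, map_mul, map_pow]
        refine add_pos_of_pos_of_nonneg (mul_pos ?_ ihA)
          (mul_nonneg (mul_nonneg hSa (pow_nonneg hqinv.le b)) ihC)
        exact add_pos_of_pos_of_nonneg (pow_pos hqpos a) (mul_nonneg hSa hSb.le)
      have hM10ne : (qWord q ((a, b) :: rest)) 1 0 ≠ 0 := fun h => by simp [h] at hM10
      refine ⟨hM00, hM10.le, fun _ => hM10, ?_⟩
      have hrw : rightCF q ((a, b) :: rest) =
          qSharpK q a + q ^ a / (qSharpK q⁻¹ b + (q⁻¹) ^ b / rightCF q rest) := rfl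
      have hDne : qSharpK q⁻¹ b * A + (q⁻¹) ^ b * C ≠ 0 := by
        rw [← h10]; exact hM10ne
      have hden : qSharpK q⁻¹ b + (q⁻¹) ^ b * C / A =
          (qSharpK q⁻¹ b * A + (q⁻¹) ^ b * C) / A := by
        rw [add_div, mul_div_cancel_right₀ _ hAne, mul_div_assoc]
      rw [hrw, ihCF, div_div_eq_mul_div, hden, div_div_eq_mul_div,
        add_div' _ _ _ hDne, h00, h10]
      congr 1
      ring

end MyAux

theorem stmt8 (r s : ℕ) (hr : 0 < r) (hs : 0 < s) (hco : Nat.Coprime r s)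
    (L : List (ℕ × ℕ)) (hL : IsCFE L ((r : ℚ) / s)) :
    (qWord (RatFunc.X : RatFunc ℚ) L) 1 0 ≠ 0 ∧
    rightCF (RatFunc.X : RatFunc ℚ) L =
      (qWord (RatFunc.X : RatFunc ℚ) L) 0 0 /
        (qWord (RatFunc.X : RatFunc ℚ) L) 1 0 := by
  obtain ⟨hne, hb, -, -⟩ := hL
  obtain ⟨-, -, hpos, hCF⟩ := MyAux.key L hb
  refine ⟨fun h => ?_, hCF⟩
  have := hpos hne
  rw [h] at this
  simp at this
end
end

section
/- For every positive rational r/s, the left q-deformation satisfies [r/s]^♭_q = t_{1,q}^{a_1} t_{2,q}^{-a_2} ⋯ t_{1,q}^{a_{2m-1}} t_{2,q}^{-a_{2m}} · (1/(1-q)), where [a_1,...,a_{2m}] is the even-length continued fraction expansion of r/s. -/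
noncomputable section

lemma qSharpK_succ {K : Type*} [Field K] (q : K) (a : ℕ) :
    qSharpK q (a+1) = qSharpK q a + q ^ a := by
  simp [qSharpK, Finset.sum_range_succ]

lemma qSharpK_succ' {K : Type*} [Field K] (q : K) (a : ℕ) :
    qSharpK q (a+1) = 1 + q * qSharpK q a := by
  simp [qSharpK, Finset.sum_range_succ', Finset.mul_sum, pow_succ']
  ring

lemma t1q_pow {K : Type*} [Field K] (q : K) (a : ℕ) :
    t1q q ^ a = !![q ^ a, qSharpK q a; 0, 1] := by
  induction a with
  | zero =>
    ext i j
    fin_cases i <;> fin_cases j <;> simp [qSharpK, Matrix.one_apply]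
  | succ n ih =>
    rw [pow_succ, ih, t1q, qSharpK_succ]
    ext i j
    fin_cases i <;> fin_cases j <;> simp [Matrix.mul_apply, Fin.sum_univ_two] <;> ring

lemma t2qInv_pow {K : Type*} [Field K] (q : K) (b : ℕ) :
    t2qInv q ^ b = !![1, 0; qSharpK q⁻¹ b, (q⁻¹) ^ b] := by
  induction b with
  | zero =>
    ext i j
    fin_cases i <;> fin_cases j <;> simp [qSharpK, Matrix.one_apply]
  | succ n ih =>
    rw [pow_succ, ih, t2qInv, qSharpK_succ]
    ext i j
    fin_cases i <;> fin_cases j <;> simp [Matrix.mul_apply, Fin.sum_univ_two, pow_succ] <;> ring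
lemma block_eq {K : Type*} [Field K] (q : K) (a b : ℕ) :
    t1q q ^ a * t2qInv q ^ b =
      !![q ^ a + qSharpK q a * qSharpK q⁻¹ b, qSharpK q a * (q⁻¹) ^ b;
         qSharpK q⁻¹ b, (q⁻¹) ^ b] := by
  rw [t1q_pow, t2qInv_pow]
  ext i j
  fin_cases i <;> fin_cases j <;> simp [Matrix.mul_apply, Fin.sum_univ_two] <;> ring

lemma mulVec_two {K : Type*} [Field K] (A B C D : K) (v : Fin 2 → K) :
    (!![A, B; C, D].mulVec v) 0 = A * v 0 + B * v 1 ∧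
    (!![A, B; C, D].mulVec v) 1 = C * v 0 + D * v 1 := by
  constructor <;> simp [Matrix.mulVec, dotProduct, Fin.sum_univ_two, Matrix.vecHead, Matrix.vecTail]
lemma sharp_inv_mul {K : Type*} [Field K] (q : K) (hq : q ≠ 0) (b : ℕ) :
    qSharpK q⁻¹ b * q ^ b = q * qSharpK q b := by
  induction b with
  | zero => simp [qSharpK]
  | succ n ih =>
    rw [qSharpK_succ, qSharpK_succ' q n]
    have h1 : (q⁻¹) ^ n * q ^ (n+1) = q := by
      rw [pow_succ, ← mul_assoc, inv_pow, inv_mul_cancel₀ (pow_ne_zero _ hq), one_mul]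
    calc (qSharpK q⁻¹ n + (q⁻¹) ^ n) * q ^ (n+1)
        = q * (qSharpK q⁻¹ n * q ^ n) + (q⁻¹) ^ n * q ^ (n+1) := by ring
      _ = q * (1 + q * qSharpK q n) := by rw [ih, h1]; ring

def SP (n : ℕ) : Polynomial ℚ := ∑ i ∈ Finset.range n, Polynomial.X ^ i

def pw : List (ℕ × ℕ) → Polynomial ℚ × Polynomial ℚ
  | [] => (1, 1 - Polynomial.X)
  | (a, b) :: L =>
      ((Polynomial.X ^ (a+b) + SP a * Polynomial.X * SP b) * (pw L).1 + SP a * (pw L).2,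
        Polynomial.X * SP b * (pw L).1 + (pw L).2)

def Bsum : List (ℕ × ℕ) → ℕ
  | [] => 0
  | p :: L => p.2 + Bsum L

abbrev φR : Polynomial ℚ →+* RatFunc ℚ := algebraMap (Polynomial ℚ) (RatFunc ℚ)

lemma φR_SP (n : ℕ) : φR (SP n) = qSharpK (RatFunc.X : RatFunc ℚ) n := by
  simp [SP, qSharpK, map_sum, map_pow, RatFunc.algebraMap_X]

lemma pw_spec (L : List (ℕ × ℕ)) :
    ((qWord (RatFunc.X : RatFunc ℚ) L).mulVec ![1, 1 - RatFunc.X]) 0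
        * RatFunc.X ^ (Bsum L) = φR (pw L).1 ∧
    ((qWord (RatFunc.X : RatFunc ℚ) L).mulVec ![1, 1 - RatFunc.X]) 1
        * RatFunc.X ^ (Bsum L) = φR (pw L).2 := by
  set q : RatFunc ℚ := RatFunc.X with hqdef
  have hq : q ≠ 0 := RatFunc.X_ne_zero
  induction L with
  | nil =>
    simp [qWord, pw, Bsum, Matrix.one_mulVec, map_sub, map_one, RatFunc.algebraMap_X]
    exact hqdef
  | cons p L ih =>
    obtain ⟨a, b⟩ := p
    have hstep : (qWord q ((a,b) :: L)).mulVec ![1, 1 - q]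
        = (t1q q ^ a * t2qInv q ^ b).mulVec ((qWord q L).mulVec ![1, 1 - q]) := by
      rw [qWord, Matrix.mulVec_mulVec]
    set x := ((qWord q L).mulVec ![1, 1 - q]) 0 with hx
    set y := ((qWord q L).mulVec ![1, 1 - q]) 1 with hy
    have h0 : ((qWord q ((a,b) :: L)).mulVec ![1, 1 - q]) 0
        = (q ^ a + qSharpK q a * qSharpK q⁻¹ b) * x + qSharpK q a * (q⁻¹) ^ b * y := by
      rw [hstep, block_eq]
      exact (mulVec_two _ _ _ _ _).1
    have h1 : ((qWord q ((a,b) :: L)).mulVec ![1, 1 - q]) 1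
        = qSharpK q⁻¹ b * x + (q⁻¹) ^ b * y := by
      rw [hstep, block_eq]
      exact (mulVec_two _ _ _ _ _).2
    have hinv : (q⁻¹) ^ b * q ^ b = 1 := by
      rw [inv_pow, inv_mul_cancel₀ (pow_ne_zero _ hq)]
    have hBsum : Bsum ((a,b) :: L) = b + Bsum L := rfl
    have hT : qSharpK q⁻¹ b * q ^ b = q * qSharpK q b := sharp_inv_mul q hq b
    constructor
    · rw [h0, hBsum, pow_add]
      have : ((q ^ a + qSharpK q a * qSharpK q⁻¹ b) * x + qSharpK q a * (q⁻¹) ^ b * y)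
          * (q ^ b * q ^ Bsum L)
          = (q ^ a * q ^ b + qSharpK q a * (qSharpK q⁻¹ b * q ^ b)) * (x * q ^ Bsum L)
            + qSharpK q a * ((q⁻¹) ^ b * q ^ b) * (y * q ^ Bsum L) := by ring
      rw [this, hT, hinv, ih.1, ih.2]
      show _ = φR ((Polynomial.X ^ (a+b) + SP a * Polynomial.X * SP b) * (pw L).1 + SP a * (pw L).2)
      rw [map_add, map_mul, map_add, map_mul, map_mul, map_pow, map_mul, φR_SP, φR_SP,
        RatFunc.algebraMap_X]
      rw [pow_add]
      ring
    · rw [h1, hBsum, pow_add]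
      have : (qSharpK q⁻¹ b * x + (q⁻¹) ^ b * y) * (q ^ b * q ^ Bsum L)
          = (qSharpK q⁻¹ b * q ^ b) * (x * q ^ Bsum L)
            + ((q⁻¹) ^ b * q ^ b) * (y * q ^ Bsum L) := by ring
      rw [this, hT, hinv, ih.1, ih.2]
      show _ = φR (Polynomial.X * SP b * (pw L).1 + (pw L).2)
      rw [map_add, map_mul, map_mul, φR_SP, RatFunc.algebraMap_X]
      ring
lemma SP_eval (n : ℕ) : (SP n).eval 1 = n := by
  simp [SP, Polynomial.eval_finset_sum]

lemma pw_pos : ∀ L : List (ℕ × ℕ), L ≠ [] → (∀ p ∈ L, 1 ≤ p.2) →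
    0 < (pw L).1.eval 1 ∧ 0 < (pw L).2.eval 1 := by
  intro L
  induction L with
  | nil => intro h; exact absurd rfl h
  | cons p L ih =>
    obtain ⟨a, b⟩ := p
    intro _ hb
    have hb1 : 1 ≤ b := hb (a, b) List.mem_cons_self
    match L with
    | [] =>
      constructor <;>
        simp [pw, SP_eval] <;> positivity
    | p' :: L' =>
      have hb' : ∀ p ∈ p' :: L', 1 ≤ p.2 := fun p hp => hb p (List.mem_cons_of_mem _ hp)
      obtain ⟨h1, h2⟩ := ih (by simp) hb'
      constructor
      · show (0:ℚ) < Polynomial.eval (1:ℚ) ((Polynomial.X ^ (a+b) + SP a * Polynomial.X * SP b) * (pw (p'::L')).1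
          + SP a * (pw (p'::L')).2)
        simp only [Polynomial.eval_add, Polynomial.eval_mul, Polynomial.eval_pow,
          Polynomial.eval_X, SP_eval, one_pow]
        positivity
      · show (0:ℚ) < Polynomial.eval (1:ℚ) (Polynomial.X * SP b * (pw (p'::L')).1 + (pw (p'::L')).2)
        simp only [Polynomial.eval_add, Polynomial.eval_mul, Polynomial.eval_X, SP_eval]
        positivity

lemma w_ne (L : List (ℕ × ℕ)) (hL : L ≠ []) (hb : ∀ p ∈ L, 1 ≤ p.2) :
    ((qWord (RatFunc.X : RatFunc ℚ) L).mulVec ![1, 1 - RatFunc.X]) 0 ≠ 0 ∧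
    ((qWord (RatFunc.X : RatFunc ℚ) L).mulVec ![1, 1 - RatFunc.X]) 1 ≠ 0 := by
  obtain ⟨h1, h2⟩ := pw_pos L hL hb
  obtain ⟨s1, s2⟩ := pw_spec L
  have hp1 : (pw L).1 ≠ 0 := fun h => by simp [h] at h1
  have hp2 : (pw L).2 ≠ 0 := fun h => by simp [h] at h2
  constructor
  · intro h
    rw [h, zero_mul] at s1
    exact hp1 ((map_eq_zero_iff _ (RatFunc.algebraMap_injective ℚ)).mp s1.symm)
  · intro h
    rw [h, zero_mul] at s2
    exact hp2 ((map_eq_zero_iff _ (RatFunc.algebraMap_injective ℚ)).mp s2.symm)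
lemma flat_eq {K : Type*} [Field K] (q : K) (hq : q ≠ 0) (b : ℕ) (hb : 1 ≤ b) :
    qFlatK q⁻¹ b = qSharpK q⁻¹ b + (q⁻¹) ^ b * (1 - q) := by
  obtain ⟨n, rfl⟩ := Nat.exists_eq_add_of_le hb
  have h1 : (q⁻¹) ^ (1 + n) * q = (q⁻¹) ^ n := by
    rw [add_comm, pow_succ, mul_assoc, inv_mul_cancel₀ hq, mul_one]
  have h2 : qSharpK q⁻¹ (1 + n) = qSharpK q⁻¹ n + (q⁻¹) ^ n := by
    rw [add_comm]; exact qSharpK_succ _ _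
  have h3 : qFlatK q⁻¹ (1 + n) = qSharpK q⁻¹ n + (q⁻¹) ^ (1 + n) := by
    have : 1 + n - 1 = n := by omega
    rw [qFlatK, this]; rfl
  rw [h3, h2, mul_sub, h1, mul_one]
  ring

lemma main_aux : ∀ L : List (ℕ × ℕ), L ≠ [] → (∀ p ∈ L, 1 ≤ p.2) →
    leftCF (RatFunc.X : RatFunc ℚ) L =
      ((qWord (RatFunc.X : RatFunc ℚ) L).mulVec ![1, 1 - RatFunc.X]) 0 /
        ((qWord (RatFunc.X : RatFunc ℚ) L).mulVec ![1, 1 - RatFunc.X]) 1 := by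
  intro L
  set q : RatFunc ℚ := RatFunc.X with hqdef
  have hq : q ≠ 0 := RatFunc.X_ne_zero
  induction L with
  | nil => intro h; exact absurd rfl h
  | cons p L ih =>
    obtain ⟨a, b⟩ := p
    intro _ hb
    have hb1 : 1 ≤ b := hb (a, b) List.mem_cons_self
    have hstep : (qWord q ((a,b) :: L)).mulVec ![1, 1 - q]
        = (t1q q ^ a * t2qInv q ^ b).mulVec ((qWord q L).mulVec ![1, 1 - q]) := by
      rw [qWord, Matrix.mulVec_mulVec]
    set x := ((qWord q L).mulVec ![1, 1 - q]) 0 with hxd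
    set y := ((qWord q L).mulVec ![1, 1 - q]) 1 with hyd
    have h0 : ((qWord q ((a,b) :: L)).mulVec ![1, 1 - q]) 0
        = (q ^ a + qSharpK q a * qSharpK q⁻¹ b) * x + qSharpK q a * (q⁻¹) ^ b * y := by
      rw [hstep, block_eq]; exact (mulVec_two _ _ _ _ _).1
    have h1 : ((qWord q ((a,b) :: L)).mulVec ![1, 1 - q]) 1
        = qSharpK q⁻¹ b * x + (q⁻¹) ^ b * y := by
      rw [hstep, block_eq]; exact (mulVec_two _ _ _ _ _).2
    obtain ⟨hw0, hw1⟩ := w_ne ((a,b) :: L) (by simp) hb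
    rw [h1] at hw1
    match L with
    | [] =>
      have hx1 : x = 1 := by
        rw [hxd]; simp [qWord, Matrix.one_mulVec]
      have hy1 : y = 1 - q := by
        rw [hyd]; simp [qWord, Matrix.one_mulVec]
      have hflat : qFlatK q⁻¹ b = qSharpK q⁻¹ b + (q⁻¹) ^ b * (1 - q) :=
        flat_eq q hq b hb1
      rw [hx1, hy1] at hw1
      have hw1' : qSharpK q⁻¹ b + q⁻¹ ^ b * (1 - q) ≠ 0 := by
        intro h; apply hw1; rw [← h]; ring
      have hL1 : leftCF q [(a,b)] = qSharpK q a + q ^ a / qFlatK q⁻¹ b := rfl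
      rw [hL1, h0, h1, hx1, hy1, hflat]
      have h2 : qSharpK q⁻¹ b * 1 + q⁻¹ ^ b * (1 - q)
          = qSharpK q⁻¹ b + q⁻¹ ^ b * (1 - q) := by ring
      rw [h2, add_div' _ _ _ hw1']
      congr 1
      ring
    | p' :: L' =>
      have hb' : ∀ p ∈ p' :: L', 1 ≤ p.2 := fun p hp => hb p (List.mem_cons_of_mem _ hp)
      have ihh := ih (by simp) hb'
      obtain ⟨hx, hy⟩ := w_ne (p' :: L') (by simp) hb'
      rw [← hxd] at hx; rw [← hyd] at hy
      have hlcf : leftCF q ((a,b) :: p' :: L')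
          = qSharpK q a + q ^ a / (qSharpK q⁻¹ b + (q⁻¹) ^ b / leftCF q (p' :: L')) := rfl
      rw [hlcf, ihh, h0, h1]
      rw [div_div_eq_mul_div]
      have hD : qSharpK q⁻¹ b + (q⁻¹) ^ b * y / x = (qSharpK q⁻¹ b * x + (q⁻¹) ^ b * y) / x := by
        field_simp
      rw [hD, div_div_eq_mul_div]
      rw [add_div' _ _ _ hw1]
      congr 1
      ring

theorem stmt9 (r s : ℕ) (hr : 0 < r) (hs : 0 < s) (hco : Nat.Coprime r s)
    (L : List (ℕ × ℕ)) (hL : IsCFE L ((r : ℚ) / s)) :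
    ((qWord (RatFunc.X : RatFunc ℚ) L).mulVec ![1, 1 - RatFunc.X]) 1 ≠ 0 ∧
    leftCF (RatFunc.X : RatFunc ℚ) L =
      ((qWord (RatFunc.X : RatFunc ℚ) L).mulVec ![1, 1 - RatFunc.X]) 0 /
        ((qWord (RatFunc.X : RatFunc ℚ) L).mulVec ![1, 1 - RatFunc.X]) 1 := by
  obtain ⟨hne, hb, -, -⟩ := hL
  exact ⟨(w_ne L hne hb).2, main_aux L hne hb⟩
end
end

section
/- If in the q-weighted Farey recursion one defines R^♯ and S^♯ with weights q^{l+1} as above, then for every positive rational r/s both R^♯(r/s) and S^♯(r/s) are polynomials in q with constant term equal to (respectively) the values R^♯ and S^♯ of the left Farey parent evaluated along the leftmost branch; in particular S^♯(r/s) has constant term 1. -/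
noncomputable section

def cfList : ℕ → ℕ → List (ℕ × ℕ)
  | r, s =>
    if h1 : r % s = 0 then [(r / s - 1, 1)]
    else if h2 : s % (r % s) = 0 then [(r / s, s / (r % s))]
    else (r / s, s / (r % s)) :: cfList (r % s) (s % (r % s))
termination_by r s => s
decreasing_by
  have hs : s ≠ 0 := by rintro rfl; simp at h2
  exact lt_trans (Nat.mod_lt _ (Nat.pos_of_ne_zero h1)) (Nat.mod_lt _ (Nat.pos_of_ne_zero hs))

lemma pairsToList_cons (a b : ℕ) (L : List (ℕ × ℕ)) :
    pairsToList ((a, b) :: L) = (a : ℤ) :: (b : ℤ) :: pairsToList L := by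
  simp [pairsToList]

lemma cfVal_cons (a : ℤ) (t : List ℤ) : cfVal (a :: t) = a + (cfVal t)⁻¹ := rfl

lemma cfList_spec : ∀ s r : ℕ, 0 < r → 0 < s → Nat.Coprime r s →
    (cfList r s ≠ [] ∧ (∀ p ∈ cfList r s, 1 ≤ p.2) ∧ (∀ p ∈ (cfList r s).tail, 1 ≤ p.1)
      ∧ cfVal (pairsToList (cfList r s)) = (r : ℚ) / s)
    ∧ (s < r → ∀ p ∈ cfList r s, 1 ≤ p.1) := by
  intro s
  induction s using Nat.strong_induction_on with
  | _ s ih =>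
    intro r hr hs hco
    rw [cfList]
    by_cases h1 : r % s = 0
    · have hs1 : s = 1 := Nat.Coprime.eq_one_of_dvd hco.symm (Nat.dvd_of_mod_eq_zero h1)
      subst hs1
      simp only [dif_pos h1, Nat.div_one]
      have hval : cfVal (pairsToList [(r - 1, 1)]) = (r : ℚ) / 1 := by
        rw [pairsToList_cons]
        simp only [pairsToList, List.flatMap_nil, cfVal_cons, cfVal]
        push_cast [Nat.cast_sub hr]
        norm_num
      refine ⟨⟨by simp, by simp, by simp, hval⟩, ?_⟩
      intro hlt p hp
      simp only [List.mem_singleton] at hp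
      subst hp
      simp only
      omega
    · rw [dif_neg h1]
      set r' := r % s with hr'def
      have hr'pos : 0 < r' := Nat.pos_of_ne_zero h1
      have hr's : r' < s := Nat.mod_lt _ hs
      have hdm2 : s * (r / s) + r' = r := Nat.div_add_mod r s
      have hco1 : Nat.Coprime r' s := by
        have h : Nat.gcd r' s = Nat.gcd r s := by
          rw [hr'def, ← Nat.gcd_rec s r, Nat.gcd_comm]
        unfold Nat.Coprime at hco ⊢
        rw [h]; exact hco
      by_cases h2 : s % r' = 0
      · -- r' ∣ s and coprime → r' = 1, b = s
        have hr'1 : r' = 1 := Nat.Coprime.eq_one_of_dvd hco1 (Nat.dvd_of_mod_eq_zero h2)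
        rw [dif_pos h2]
        have hb : s / r' = s := by rw [hr'1, Nat.div_one]
        have hreq : s * (r / s) + 1 = r := by rw [← hr'1]; exact hdm2
        have hval : cfVal (pairsToList [(r / s, s / r')]) = (r : ℚ) / s := by
          rw [pairsToList_cons]
          simp only [pairsToList, List.flatMap_nil, cfVal_cons, cfVal]
          simp only [Int.cast_natCast]
          rw [hb]
          have hsQ : (s : ℚ) ≠ 0 := by positivity
          have : (s : ℚ) * ((r / s : ℕ) : ℚ) + 1 = (r : ℚ) := by exact_mod_cast congrArg (Nat.cast (R := ℚ)) hreq
          simp only [inv_zero, add_zero]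
          field_simp
          linarith [this]
        refine ⟨⟨by simp, ?_, by simp, hval⟩, ?_⟩
        · intro p hp; simp only [List.mem_singleton] at hp; subst hp
          simp only [hb]; exact hs
        · intro hlt p hp; simp only [List.mem_singleton] at hp; subst hp
          exact Nat.one_le_div_iff hs |>.mpr (le_of_lt hlt)
      · rw [dif_neg h2]
        set s' := s % r' with hs'def
        have hs'pos : 0 < s' := Nat.pos_of_ne_zero h2
        have hs'r' : s' < r' := Nat.mod_lt _ hr'pos
        have hdm1 : r' * (s / r') + s' = s := Nat.div_add_mod s r'
        have hco2 : Nat.Coprime r' s' := by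
          have h : Nat.gcd s' r' = Nat.gcd r' s := by
            rw [hs'def, ← Nat.gcd_rec r' s]
          have : Nat.Coprime s' r' := by
            unfold Nat.Coprime at hco1 ⊢; rw [h]; exact hco1
          exact this.symm
        obtain ⟨⟨hne, hb1, htl, hval⟩, hhead⟩ := ih s' (lt_trans hs'r' hr's) r' hr'pos hs'pos hco2
        have hheads : ∀ p ∈ cfList r' s', 1 ≤ p.1 := hhead hs'r'
        have hbpos : 1 ≤ s / r' := (Nat.one_le_div_iff hr'pos).mpr (le_of_lt hr's)
        have hvalQ : cfVal (pairsToList ((r / s, s / r') :: cfList r' s')) = (r : ℚ) / s := by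
          rw [pairsToList_cons, cfVal_cons, cfVal_cons, hval]
          have hsQ : (s : ℚ) ≠ 0 := by positivity
          have hr'Q : (r' : ℚ) ≠ 0 := by positivity
          have hs'Q : (s' : ℚ) ≠ 0 := by positivity
          have e1 : (r' : ℚ) * ((s / r' : ℕ) : ℚ) + s' = (s : ℚ) := by exact_mod_cast congrArg (Nat.cast (R := ℚ)) hdm1
          have e2 : (s : ℚ) * ((r / s : ℕ) : ℚ) + r' = (r : ℚ) := by exact_mod_cast congrArg (Nat.cast (R := ℚ)) hdm2
          simp only [Int.cast_natCast]
          rw [inv_div]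
          have hx : ((s / r' : ℕ) : ℚ) + (s' : ℚ) / r' = (s : ℚ) / r' := by
            field_simp; linarith [e1]
          rw [hx, inv_div]
          field_simp
          linarith [e2]
        refine ⟨⟨by simp, ?_, ?_, hvalQ⟩, ?_⟩
        · intro p hp
          rcases List.mem_cons.mp hp with h | h
          · subst h; exact hbpos
          · exact hb1 p h
        · intro p hp
          simp only [List.tail_cons] at hp
          exact hheads p hp
        · intro hlt p hp
          rcases List.mem_cons.mp hp with h | h
          · subst h; exact (Nat.one_le_div_iff hs).mpr (le_of_lt hlt)
          · exact hheads p h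


lemma exists_assocInt (r s : ℕ) (hr : 0 < r) (hs : 0 < s) (hco : Nat.Coprime r s) :
    ∃ l, AssocInt r s l := by
  obtain ⟨⟨hne, hb, ht, hv⟩, -⟩ := cfList_spec s r hr hs hco
  obtain ⟨⟨a, b⟩, hx⟩ := Option.isSome_iff_exists.mp (List.getLast?_isSome.mpr hne)
  exact ⟨if 2 ≤ b then 0 else a, cfList r s, a, b, ⟨hne, hb, ht, hv⟩, hx, rfl⟩

lemma exists_pq : ∀ n r s : ℕ, r + s ≤ n → 0 < r → 0 < s → Nat.Coprime r s →
    ∃ p q, 0 < q ∧ q ≤ s ∧ p < r ∧ r * q = p * s + 1 := by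
  intro n
  induction n with
  | zero => intro r s h hr hs _; omega
  | succ n ih =>
    intro r s hn hr hs hco
    rcases eq_or_lt_of_le (show 1 ≤ r from hr) with hr1 | hr1
    · -- r = 1
      exact ⟨0, 1, by omega, hs, by omega, by omega⟩
    · rcases lt_trichotomy r s with h | h | h
      · -- r < s : recurse on (r, s - r)
        have hco' : Nat.Coprime r (s - r) := (Nat.coprime_sub_self_right (le_of_lt h)).mpr hco
        obtain ⟨p, q, hq0, hqle, hpl, heq⟩ := ih r (s - r) (by omega) hr (by omega) hco'
        refine ⟨p, q + p, by omega, by omega, hpl, ?_⟩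
        have : r * (q + p) = r * q + r * p := by ring
        rw [this, heq]
        have : p * s = p * (s - r) + p * r := by
          rw [← Nat.mul_add, Nat.sub_add_cancel (le_of_lt h)]
        rw [this]; ring
      · -- r = s → r = s = 1, contradiction with r > 1 and coprime
        exfalso
        have : s = 1 := by
          have := hco
          rw [h] at this
          simpa using this
        omega
      · -- s < r : recurse on (r - s, s)
        have hco' : Nat.Coprime (r - s) s := (Nat.coprime_sub_self_left (le_of_lt h)).mpr hco
        obtain ⟨p, q, hq0, hqle, hpl, heq⟩ := ih (r - s) s (by omega) (by omega) hs hco'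
        refine ⟨p + q, q, hq0, hqle, by omega, ?_⟩
        have h1 : r * q = (r - s) * q + s * q := by
          rw [← Nat.add_mul, Nat.sub_add_cancel (le_of_lt h)]
        rw [h1, heq]; ring

theorem stmt19 (R S : ℕ → ℕ → Polynomial ℤ)
    (hR0 : R 0 1 = 0) (hS0 : S 0 1 = 1) (hRinf : R 1 0 = 1) (hSinf : S 1 0 = 0)
    (hrec : ∀ p q u v l : ℕ, FareyDecomp p q u v → AssocInt (p + u) (q + v) l →
      R (p + u) (q + v) = R p q + Polynomial.X ^ (l + 1) * R u v ∧
      S (p + u) (q + v) = S p q + Polynomial.X ^ (l + 1) * S u v)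
    :
    (∀ p q u v l : ℕ, FareyDecomp p q u v → AssocInt (p + u) (q + v) l →
      (R (p + u) (q + v)).coeff 0 = (R p q).coeff 0 ∧
      (S (p + u) (q + v)).coeff 0 = (S p q).coeff 0) ∧
    (∀ r s : ℕ, 0 < r → 0 < s → Nat.Coprime r s → (S r s).coeff 0 = 1) := by
  constructor
  · intro p q u v l hFD hAI
    obtain ⟨h1, h2⟩ := hrec p q u v l hFD hAI
    constructor
    · rw [h1]; simp [Polynomial.mul_coeff_zero, Polynomial.coeff_X_pow]
    · rw [h2]; simp [Polynomial.mul_coeff_zero, Polynomial.coeff_X_pow]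
  · have key : ∀ n, ∀ r s : ℕ, r + s ≤ n → 0 < r → 0 < s → Nat.Coprime r s →
        (S r s).coeff 0 = 1 := by
      intro n
      induction n with
      | zero => intro r s h hr hs _; omega
      | succ n ih =>
        intro r s hn hr hs hco
        obtain ⟨p, q, hq0, hqle, hpl, heq⟩ := exists_pq (r + s) r s le_rfl hr hs hco
        have hpu : p + (r - p) = r := by omega
        have hqv : q + (s - q) = s := by omega
        have heqZ : (r : ℤ) * q = (p : ℤ) * s + 1 := by exact_mod_cast heq
        have huq : (r - p) * q = p * (s - q) + 1 := by
          zify [hqle, hpl.le]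
          linear_combination heqZ
        have hcopq : Nat.Coprime p q := by
          have h1 : Nat.gcd p q ∣ r * q := Dvd.dvd.mul_left (Nat.gcd_dvd_right p q) r
          have h2 : Nat.gcd p q ∣ p * s := Dvd.dvd.mul_right (Nat.gcd_dvd_left p q) s
          have h3 := Nat.dvd_sub h1 h2
          rw [heq, Nat.add_sub_cancel_left] at h3
          exact Nat.dvd_one.mp h3
        have hcouv : Nat.Coprime (r - p) (s - q) := by
          have h1 : Nat.gcd (r - p) (s - q) ∣ (r - p) * q :=
            Dvd.dvd.mul_right (Nat.gcd_dvd_left _ _) q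
          have h2 : Nat.gcd (r - p) (s - q) ∣ p * (s - q) :=
            Dvd.dvd.mul_left (Nat.gcd_dvd_right _ _) p
          have h3 := Nat.dvd_sub h1 h2
          rw [huq, Nat.add_sub_cancel_left] at h3
          exact Nat.dvd_one.mp h3
        have hFD : FareyDecomp p q (r - p) (s - q) := ⟨hcopq, hcouv, huq⟩
        obtain ⟨l, hAI⟩ := exists_assocInt r s hr hs hco
        have h2 := (hrec p q (r - p) (s - q) l hFD (by rwa [hpu, hqv])).2
        rw [hpu, hqv] at h2
        rw [h2]
        simp only [Polynomial.coeff_add, Polynomial.mul_coeff_zero,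
          Polynomial.coeff_X_pow]
        by_cases hp : p = 0
        · have hq1 : q = 1 := by
            subst hp
            simp only [Nat.zero_mul, Nat.zero_add] at heq
            exact Nat.eq_one_of_mul_eq_one_left heq
          rw [hp, hq1, hS0]
          simp
        · have := ih p q (by omega) (Nat.pos_of_ne_zero hp) hq0 hcopq
          rw [this]
          simp
    exact fun r s hr hs hco => key (r + s) r s le_rfl hr hs hco
end
end
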